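/- Let g be a finite-dimensional complex Lie algebra, (ρ, V) a finite-dimensional representation with dim g = dim V, and suppose there exists v ∈ V with {ρ(x)v : x ∈ g} = V (a generic point of a cuspidal prehomogeneous vector space). Then g carries a left-symmetric product ∗, defined by ρ(x)ρ(y)v = ρ(x∗y)v, whose adjacent Lie bracket is the bracket of g, and this product has a right identity (the unique e ∈ g with ρ(e)v = v). -/

import Mathlib

attribute [local instance 100] LieRing.ofAssociativeRing

/-- A cuspidal prehomogeneous vector space `(g, ρ, V)` (with `dim g = dim V`
and a generic point `v`) induces a compatible left-symmetric product on `g`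
with a right identity. -/
theorem cuspidalPV_gives_lsa {g : Type*} [LieRing g] [LieAlgebra ℂ g]
    [FiniteDimensional ℂ g] {V : Type*} [AddCommGroup V] [Module ℂ V]
    [FiniteDimensional ℂ V]
    (ρ : g →ₗ⁅ℂ⁆ Module.End ℂ V)
    (hdim : Module.finrank ℂ g = Module.finrank ℂ V)
    (v : V) (hv : ∀ w : V, ∃ x : g, ρ x v = w) :
    ∃ mul : g →ₗ[ℂ] g →ₗ[ℂ] g,
      (∀ x y : g, ρ x (ρ y v) = ρ (mul x y) v) ∧
      (∀ x y z : g, mul (mul x y) z - mul x (mul y z)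
          = mul (mul y x) z - mul y (mul x z)) ∧
      (∀ x y : g, mul x y - mul y x = ⁅x, y⁆) ∧
      ∃ e : g, ρ e v = v ∧ ∀ x : g, mul x e = x := by
  -- the orbit map x ↦ ρ x v
  let φ : g →ₗ[ℂ] V :=
    { toFun := fun x => ρ x v
      map_add' := fun x y => by simp
      map_smul' := fun c x => by simp }
  have hsurj : Function.Surjective φ := fun w => hv w
  have hinj : Function.Injective φ :=
    (LinearMap.injective_iff_surjective_of_finrank_eq_finrank hdim).mpr hsurj
  let ψ : g ≃ₗ[ℂ] V := LinearEquiv.ofBijective φ ⟨hinj, hsurj⟩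
  have hψ : ∀ x : g, ψ x = ρ x v := fun x => rfl
  have hψs : ∀ w : V, ρ (ψ.symm w) v = w := fun w => ψ.apply_symm_apply w
  let mul : g →ₗ[ℂ] g →ₗ[ℂ] g := LinearMap.mk₂ ℂ
    (fun x y => ψ.symm (ρ x (ρ y v)))
    (fun x x' y => by simp)
    (fun c x y => by simp)
    (fun x y y' => by simp)
    (fun c x y => by simp)
  have key : ∀ x y : g, ρ x (ρ y v) = ρ (mul x y) v := by
    intro x y
    show ρ x (ρ y v) = ρ (ψ.symm (ρ x (ρ y v))) v
    rw [hψs]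
  have compat : ∀ x y : g, mul x y - mul y x = ⁅x, y⁆ := by
    intro x y
    apply hinj
    have : φ (mul x y - mul y x) = ρ (mul x y) v - ρ (mul y x) v := by
      simp [φ]
    rw [this, ← key, ← key]
    have hb : φ ⁅x, y⁆ = ρ ⁅x, y⁆ v := rfl
    rw [hb, LieHom.map_lie]
    simp [Module.End.lie_apply]
  refine ⟨mul, key, ?_, compat, ⟨ψ.symm v, hψs v, ?_⟩⟩
  · intro x y z
    apply hinj
    have expand : ∀ a b c : g,
        φ (mul (mul a b) c - mul a (mul b c))
          = ρ (mul a b) (ρ c v) - ρ a (ρ b (ρ c v)) := by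
      intro a b c
      have : φ (mul (mul a b) c - mul a (mul b c))
          = ρ (mul (mul a b) c) v - ρ (mul a (mul b c)) v := by simp [φ]
      rw [this, ← key, ← key, ← key]
    rw [expand, expand]
    have : ρ (mul x y) (ρ z v) - ρ (mul y x) (ρ z v)
        = ρ (mul x y - mul y x) (ρ z v) := by simp
    have hcomm : ρ (mul x y) (ρ z v) - ρ (mul y x) (ρ z v)
        = ρ ⁅x, y⁆ (ρ z v) := by rw [this, compat]
    have hlie : ρ ⁅x, y⁆ (ρ z v) = ρ x (ρ y (ρ z v)) - ρ y (ρ x (ρ z v)) := by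
      rw [LieHom.map_lie]
      simp [Module.End.lie_apply]
    rw [sub_eq_sub_iff_sub_eq_sub]
    exact hcomm.trans hlie
  · intro x
    apply hinj
    show ρ (mul x (ψ.symm v)) v = ρ x v
    rw [← key, hψs]
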